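/- arXiv:2506.23954 — 5 statements merged into one kernel-verified Lean document; each statement's English description precedes it below -/
import Mathlib

section
/- Let k₀, k₁ : [0,C] → ℝ be continuous strictly increasing with k₁(t) < k₀(t) for all t ∈ (0,C] and k₀(0) = k₁(0). Let κ₁ < κ₀ with k₀(0) ≤ κ₁ and κ₀ ≤ min(k₀(C), k₁(C)). Then ∫_{κ₁}^{κ₀} k₀⁻¹(s) ds < ∫_{κ₁}^{κ₀} k₁⁻¹(s) ds. -/
open Set

/-- With `k₁ < k₀` on `(0,C]` and equal values at `0`, the integral of `k₀⁻¹` over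
`[κ₁, κ₀]` is strictly below the integral of `k₁⁻¹` over the same interval. -/
theorem stmt_2 (C : ℝ) (hC : 0 < C) (k₀ k₁ kinv₀ kinv₁ : ℝ → ℝ)
    (hk₀_cont : ContinuousOn k₀ (Set.Icc 0 C))
    (hk₁_cont : ContinuousOn k₁ (Set.Icc 0 C))
    (hk₀_mono : StrictMonoOn k₀ (Set.Icc 0 C))
    (hk₁_mono : StrictMonoOn k₁ (Set.Icc 0 C))
    (hlt : ∀ t ∈ Set.Ioc 0 C, k₁ t < k₀ t)
    (heq0 : k₀ 0 = k₁ 0)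
    (hinv₀_left : ∀ t ∈ Set.Icc 0 C, kinv₀ (k₀ t) = t)
    (hinv₀_right : ∀ s ∈ Set.Icc (k₀ 0) (k₀ C), kinv₀ s ∈ Set.Icc 0 C ∧ k₀ (kinv₀ s) = s)
    (hinv₁_left : ∀ t ∈ Set.Icc 0 C, kinv₁ (k₁ t) = t)
    (hinv₁_right : ∀ s ∈ Set.Icc (k₁ 0) (k₁ C), kinv₁ s ∈ Set.Icc 0 C ∧ k₁ (kinv₁ s) = s)
    (κ₀ κ₁ : ℝ) (hκ : κ₁ < κ₀) (hκ₁lb : k₀ 0 ≤ κ₁)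
    (hκ₀ub : κ₀ ≤ min (k₀ C) (k₁ C)) :
    (∫ s in κ₁..κ₀, kinv₀ s) < ∫ s in κ₁..κ₀, kinv₁ s := by
  have hsub₀ : Set.Icc κ₁ κ₀ ⊆ Set.Icc (k₀ 0) (k₀ C) := by
    apply Set.Icc_subset_Icc hκ₁lb (hκ₀ub.trans (min_le_left _ _))
  have hsub₁ : Set.Icc κ₁ κ₀ ⊆ Set.Icc (k₁ 0) (k₁ C) := by
    apply Set.Icc_subset_Icc (heq0 ▸ hκ₁lb) (hκ₀ub.trans (min_le_right _ _))
  -- monotonicity of the inverses on [κ₁, κ₀]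
  have hm₀ : MonotoneOn kinv₀ (Set.Icc κ₁ κ₀) := by
    intro s hs s' hs' hss
    obtain ⟨ht, hk⟩ := hinv₀_right s (hsub₀ hs)
    obtain ⟨ht', hk'⟩ := hinv₀_right s' (hsub₀ hs')
    by_contra h
    push_neg at h
    exact absurd (hk' ▸ hk ▸ hk₀_mono ht' ht h) (by linarith)
  have hm₁ : MonotoneOn kinv₁ (Set.Icc κ₁ κ₀) := by
    intro s hs s' hs' hss
    obtain ⟨ht, hk⟩ := hinv₁_right s (hsub₁ hs)
    obtain ⟨ht', hk'⟩ := hinv₁_right s' (hsub₁ hs')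
    by_contra h
    push_neg at h
    exact absurd (hk' ▸ hk ▸ hk₁_mono ht' ht h) (by linarith)
  have huIcc : Set.uIcc κ₁ κ₀ = Set.Icc κ₁ κ₀ := Set.uIcc_of_le hκ.le
  have hint₀ : IntervalIntegrable kinv₀ MeasureTheory.volume κ₁ κ₀ :=
    (huIcc ▸ hm₀ : MonotoneOn kinv₀ (Set.uIcc κ₁ κ₀)).intervalIntegrable
  have hint₁ : IntervalIntegrable kinv₁ MeasureTheory.volume κ₁ κ₀ :=
    (huIcc ▸ hm₁ : MonotoneOn kinv₁ (Set.uIcc κ₁ κ₀)).intervalIntegrable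
  -- strict pointwise inequality on (κ₁, κ₀]
  have hstrict : ∀ s ∈ Set.Ioc κ₁ κ₀, kinv₀ s < kinv₁ s := by
    intro s hs
    have hs' : s ∈ Set.Icc κ₁ κ₀ := ⟨hs.1.le, hs.2⟩
    obtain ⟨ht₀, hk₀s⟩ := hinv₀_right s (hsub₀ hs')
    obtain ⟨ht₁, hk₁s⟩ := hinv₁_right s (hsub₁ hs')
    have h0C : (0 : ℝ) ∈ Set.Icc 0 C := ⟨le_refl _, hC.le⟩
    have hpos : 0 < kinv₀ s := by
      rcases lt_or_eq_of_le ht₀.1 with h | h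
      · exact h
      · exfalso
        have : k₀ 0 = s := h ▸ hk₀s
        linarith [hs.1, hκ₁lb]
    have h1 : k₁ (kinv₀ s) < k₁ (kinv₁ s) := by
      have := hlt (kinv₀ s) ⟨hpos, ht₀.2⟩
      rw [hk₀s] at this
      rw [hk₁s]
      exact this
    by_contra h
    push_neg at h
    rcases lt_or_eq_of_le h with h' | h'
    · exact absurd (hk₁_mono ht₁ ht₀ h') (by linarith)
    · rw [h'] at h1; exact lt_irrefl _ h1
  apply intervalIntegral.integral_lt_integral_of_ae_le_of_measure_setOf_lt_ne_zero hκ.le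
    hint₀ hint₁
  · filter_upwards [MeasureTheory.ae_restrict_mem measurableSet_Ioc] with s hs
    exact (hstrict s hs).le
  · intro h
    have hle : MeasureTheory.volume.restrict (Set.Ioc κ₁ κ₀) (Set.Ioc κ₁ κ₀)
        ≤ MeasureTheory.volume.restrict (Set.Ioc κ₁ κ₀) {x | kinv₀ x < kinv₁ x} :=
      MeasureTheory.measure_mono fun x hx => hstrict x hx
    rw [h] at hle
    have : MeasureTheory.volume (Set.Ioc κ₁ κ₀) = 0 := by
      have := MeasureTheory.Measure.restrict_apply_self MeasureTheory.volume (Set.Ioc κ₁ κ₀)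
      rw [← this]
      exact le_antisymm hle zero_le
    rw [Real.volume_Ioc] at this
    simp only [ENNReal.ofReal_eq_zero] at this
    linarith
end

section
/- Let g : [a,b] → ℝ be bounded and measurable with concavification ĝ, and let K : [a,b] → ℝ be continuous and convex. Then sup { ∫ g dγ − K(∫ x dγ(x)) : γ a Borel probability measure on [a,b] } = max_{α ∈ [a,b]} ( ĝ(α) − K(α) ), provided g is continuous (so that ĝ(α) is attained by two-point measures). -/
open MeasureTheory Set
lemma chord3A (g : ℝ → ℝ) (x₁ x₂ x₃ w₁ w₂ w₃ : ℝ)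
    (h12 : x₁ ≤ x₂) (h23 : x₂ ≤ x₃) (hw₁ : 0 ≤ w₁) (hw₂ : 0 ≤ w₂) (hw₃ : 0 ≤ w₃)
    (hsum : w₁ + w₂ + w₃ = 1) (hmid : x₂ ≤ w₁*x₁ + w₂*x₂ + w₃*x₃) :
    ∃ t p q, 0 ≤ t ∧ t ≤ 1 ∧ (p = x₁ ∨ p = x₂ ∨ p = x₃) ∧ (q = x₁ ∨ q = x₂ ∨ q = x₃) ∧
      t*p + (1-t)*q = w₁*x₁ + w₂*x₂ + w₃*x₃ ∧
      w₁ * g x₁ + w₂ * g x₂ + w₃ * g x₃ ≤ t * g p + (1-t) * g q := by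
  have hw₂e : w₂ = 1 - w₁ - w₃ := by linarith
  subst hw₂e
  have hα₃ : w₁*x₁ + (1 - w₁ - w₃)*x₂ + w₃*x₃ ≤ x₃ := by
    nlinarith [mul_nonneg hw₁ (sub_nonneg.2 (h12.trans h23)), mul_nonneg hw₂ (sub_nonneg.2 h23)]
  rcases eq_or_lt_of_le h23 with h23e | h23s
  · -- x₂ = x₃, so the barycenter equals x₂
    subst h23e
    have hαx₂ : w₁*x₁ + (1 - w₁ - w₃)*x₂ + w₃*x₂ = x₂ := le_antisymm hα₃ hmid
    have hkey : w₁ * (x₂ - x₁) = 0 := by nlinarith [hαx₂]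
    rcases mul_eq_zero.1 hkey with hw10 | hx12
    · refine ⟨1, x₂, x₂, by norm_num, by norm_num, Or.inr (Or.inl rfl), Or.inr (Or.inl rfl),
        by linarith, ?_⟩
      subst hw10
      ring_nf
      simp
    · have hx1x2 : x₁ = x₂ := by linarith
      subst hx1x2
      refine ⟨1, x₁, x₁, by norm_num, by norm_num, Or.inl rfl, Or.inl rfl, by linarith, ?_⟩
      nlinarith []
  · -- x₂ < x₃
    have hpos : (0:ℝ) < x₃ - x₂ := by linarith
    by_cases hcase : (g x₁ - g x₂) * (x₃ - x₂) ≤ (g x₃ - g x₂) * (x₁ - x₂)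
    · -- point 1 lies below the chord (2,3): use pair (x₂, x₃)
      have hX : (0:ℝ) ≤ (x₃ - x₁) * g x₂ + (x₁ - x₂) * g x₃ - g x₁ * (x₃ - x₂) := by
        nlinarith [hcase]
      refine ⟨(x₃ - (w₁*x₁ + (1 - w₁ - w₃)*x₂ + w₃*x₃))/(x₃ - x₂), x₂, x₃,
        div_nonneg (by linarith) hpos.le, ?_, Or.inr (Or.inl rfl), Or.inr (Or.inr rfl), ?_, ?_⟩
      · rw [div_le_one hpos]; linarith
      · field_simp
        ring
      · have key : (w₁ * g x₁ + (1 - w₁ - w₃) * g x₂ + w₃ * g x₃) * (x₃ - x₂)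
            ≤ (x₃ - (w₁*x₁ + (1 - w₁ - w₃)*x₂ + w₃*x₃)) * g x₂
              + ((w₁*x₁ + (1 - w₁ - w₃)*x₂ + w₃*x₃) - x₂) * g x₃ := by
          nlinarith [mul_nonneg hw₁ hX]
        have heqt : (x₃ - (w₁*x₁ + (1 - w₁ - w₃)*x₂ + w₃*x₃))/(x₃ - x₂) * g x₂
            + (1 - (x₃ - (w₁*x₁ + (1 - w₁ - w₃)*x₂ + w₃*x₃))/(x₃ - x₂)) * g x₃
            = ((x₃ - (w₁*x₁ + (1 - w₁ - w₃)*x₂ + w₃*x₃)) * g x₂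
              + ((w₁*x₁ + (1 - w₁ - w₃)*x₂ + w₃*x₃) - x₂) * g x₃)/(x₃ - x₂) := by
          field_simp
          try ring
        rw [heqt]
        exact (le_div_iff₀ hpos).2 key
    · -- point 2 lies strictly above the chord (2,3)-through-1 : use pair (x₁, x₃)
      push_neg at hcase
      have hx12 : x₁ < x₂ := by
        rcases eq_or_lt_of_le h12 with he | h
        · exfalso; rw [he] at hcase; nlinarith
        · exact h
      have hx13 : x₁ < x₃ := hx12.trans h23s
      have hpos' : (0:ℝ) < x₃ - x₁ := by linarith
      have hX : (0:ℝ) ≤ (x₃ - x₂) * g x₁ + (x₂ - x₁) * g x₃ - g x₂ * (x₃ - x₁) := by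
        nlinarith [hcase]
      refine ⟨(x₃ - (w₁*x₁ + (1 - w₁ - w₃)*x₂ + w₃*x₃))/(x₃ - x₁), x₁, x₃,
        div_nonneg (by linarith) hpos'.le, ?_, Or.inl rfl, Or.inr (Or.inr rfl), ?_, ?_⟩
      · rw [div_le_one hpos']
        nlinarith [mul_nonneg hw₁ (sub_nonneg.2 h12), mul_nonneg hw₃ (sub_nonneg.2 h23s.le),
          mul_nonneg hw₂ (sub_nonneg.2 h12)]
      · field_simp
        ring
      · have key : (w₁ * g x₁ + (1 - w₁ - w₃) * g x₂ + w₃ * g x₃) * (x₃ - x₁)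
            ≤ (x₃ - (w₁*x₁ + (1 - w₁ - w₃)*x₂ + w₃*x₃)) * g x₁
              + ((w₁*x₁ + (1 - w₁ - w₃)*x₂ + w₃*x₃) - x₁) * g x₃ := by
          nlinarith [mul_nonneg hw₂ hX]
        have heqt : (x₃ - (w₁*x₁ + (1 - w₁ - w₃)*x₂ + w₃*x₃))/(x₃ - x₁) * g x₁
            + (1 - (x₃ - (w₁*x₁ + (1 - w₁ - w₃)*x₂ + w₃*x₃))/(x₃ - x₁)) * g x₃
            = ((x₃ - (w₁*x₁ + (1 - w₁ - w₃)*x₂ + w₃*x₃)) * g x₁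
              + ((w₁*x₁ + (1 - w₁ - w₃)*x₂ + w₃*x₃) - x₁) * g x₃)/(x₃ - x₁) := by
          field_simp
          try ring
        rw [heqt]
        exact (le_div_iff₀ hpos').2 key

lemma chord3S (g : ℝ → ℝ) (x₁ x₂ x₃ w₁ w₂ w₃ : ℝ)
    (h12 : x₁ ≤ x₂) (h23 : x₂ ≤ x₃) (hw₁ : 0 ≤ w₁) (hw₂ : 0 ≤ w₂) (hw₃ : 0 ≤ w₃)
    (hsum : w₁ + w₂ + w₃ = 1) :
    ∃ t p q, 0 ≤ t ∧ t ≤ 1 ∧ (p = x₁ ∨ p = x₂ ∨ p = x₃) ∧ (q = x₁ ∨ q = x₂ ∨ q = x₃) ∧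
      t*p + (1-t)*q = w₁*x₁ + w₂*x₂ + w₃*x₃ ∧
      w₁ * g x₁ + w₂ * g x₂ + w₃ * g x₃ ≤ t * g p + (1-t) * g q := by
  rcases le_total x₂ (w₁*x₁ + w₂*x₂ + w₃*x₃) with hmid | hmid
  · exact chord3A g x₁ x₂ x₃ w₁ w₂ w₃ h12 h23 hw₁ hw₂ hw₃ hsum hmid
  · obtain ⟨t, p, q, ht0, ht1, hp, hq, heq, hle⟩ :=
      chord3A (fun x => g (-x)) (-x₃) (-x₂) (-x₁) w₃ w₂ w₁ (by linarith) (by linarith)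
        hw₃ hw₂ hw₁ (by linarith) (by linarith)
    simp only [neg_neg] at hle
    refine ⟨t, -p, -q, ht0, ht1, ?_, ?_, by linarith, ?_⟩
    · rcases hp with h | h | h <;> rw [h] <;> simp
    · rcases hq with h | h | h <;> rw [h] <;> simp
    · have h1 : g (-p) = g (-p) := rfl
      calc w₁ * g x₁ + w₂ * g x₂ + w₃ * g x₃ = w₃ * g x₃ + w₂ * g x₂ + w₁ * g x₁ := by ring
        _ ≤ t * g (-p) + (1-t) * g (-q) := hle

lemma chord3 (g : ℝ → ℝ) (x₁ x₂ x₃ w₁ w₂ w₃ : ℝ)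
    (hw₁ : 0 ≤ w₁) (hw₂ : 0 ≤ w₂) (hw₃ : 0 ≤ w₃) (hsum : w₁ + w₂ + w₃ = 1) :
    ∃ t p q, 0 ≤ t ∧ t ≤ 1 ∧ (p = x₁ ∨ p = x₂ ∨ p = x₃) ∧ (q = x₁ ∨ q = x₂ ∨ q = x₃) ∧
      t*p + (1-t)*q = w₁*x₁ + w₂*x₂ + w₃*x₃ ∧
      w₁ * g x₁ + w₂ * g x₂ + w₃ * g x₃ ≤ t * g p + (1-t) * g q := by
  rcases le_total x₁ x₂ with h12 | h21
  · rcases le_total x₂ x₃ with h23 | h32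
    · exact chord3S g x₁ x₂ x₃ w₁ w₂ w₃ h12 h23 hw₁ hw₂ hw₃ hsum
    · rcases le_total x₁ x₃ with h13 | h31
      · obtain ⟨t, p, q, ht0, ht1, hp, hq, heq, hle⟩ :=
          chord3S g x₁ x₃ x₂ w₁ w₃ w₂ h13 h32 hw₁ hw₃ hw₂ (by linarith)
        exact ⟨t, p, q, ht0, ht1, by tauto, by tauto, by linarith, by linarith⟩
      · obtain ⟨t, p, q, ht0, ht1, hp, hq, heq, hle⟩ :=
          chord3S g x₃ x₁ x₂ w₃ w₁ w₂ h31 h12 hw₃ hw₁ hw₂ (by linarith)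
        exact ⟨t, p, q, ht0, ht1, by tauto, by tauto, by linarith, by linarith⟩
  · rcases le_total x₁ x₃ with h13 | h31
    · obtain ⟨t, p, q, ht0, ht1, hp, hq, heq, hle⟩ :=
        chord3S g x₂ x₁ x₃ w₂ w₁ w₃ h21 h13 hw₂ hw₁ hw₃ (by linarith)
      exact ⟨t, p, q, ht0, ht1, by tauto, by tauto, by linarith, by linarith⟩
    · rcases le_total x₂ x₃ with h23 | h32
      · obtain ⟨t, p, q, ht0, ht1, hp, hq, heq, hle⟩ :=
          chord3S g x₂ x₃ x₁ w₂ w₃ w₁ h23 h31 hw₂ hw₃ hw₁ (by linarith)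
        exact ⟨t, p, q, ht0, ht1, by tauto, by tauto, by linarith, by linarith⟩
      · obtain ⟨t, p, q, ht0, ht1, hp, hq, heq, hle⟩ :=
          chord3S g x₃ x₂ x₁ w₃ w₂ w₁ h32 h21 hw₃ hw₂ hw₁ (by linarith)
        exact ⟨t, p, q, ht0, ht1, by tauto, by tauto, by linarith, by linarith⟩

set_option maxHeartbeats 1000000 in
lemma chord4 (g : ℝ → ℝ) (x₁ x₂ x₃ x₄ w₁ w₂ w₃ w₄ : ℝ)
    (hw₁ : 0 ≤ w₁) (hw₂ : 0 ≤ w₂) (hw₃ : 0 ≤ w₃) (hw₄ : 0 ≤ w₄)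
    (hsum : w₁ + w₂ + w₃ + w₄ = 1) :
    ∃ t p q, 0 ≤ t ∧ t ≤ 1 ∧ (p = x₁ ∨ p = x₂ ∨ p = x₃ ∨ p = x₄) ∧
      (q = x₁ ∨ q = x₂ ∨ q = x₃ ∨ q = x₄) ∧
      t*p + (1-t)*q = w₁*x₁ + w₂*x₂ + w₃*x₃ + w₄*x₄ ∧
      w₁ * g x₁ + w₂ * g x₂ + w₃ * g x₃ + w₄ * g x₄ ≤ t * g p + (1-t) * g q := by
  by_cases h4 : w₄ = 1
  · have h1 : w₁ = 0 := by linarith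
    have h2 : w₂ = 0 := by linarith
    have h3 : w₃ = 0 := by linarith
    refine ⟨1, x₄, x₄, by norm_num, by norm_num, by tauto, by tauto, ?_, ?_⟩ <;>
      rw [h1, h2, h3, h4] <;> ring_nf <;> simp
  · have hW : 0 < 1 - w₄ := by
      rcases lt_or_eq_of_le (by linarith : w₄ ≤ 1) with h | h
      · linarith
      · exact absurd h h4
    obtain ⟨t, p, q, ht0, ht1, hp, hq, heq, hle⟩ :=
      chord3 g x₁ x₂ x₃ (w₁/(1-w₄)) (w₂/(1-w₄)) (w₃/(1-w₄))
        (div_nonneg hw₁ hW.le) (div_nonneg hw₂ hW.le) (div_nonneg hw₃ hW.le)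
        (by field_simp; linarith)
    obtain ⟨t', p', q', ht0', ht1', hp', hq', heq', hle'⟩ :=
      chord3 g p q x₄ ((1-w₄)*t) ((1-w₄)*(1-t)) w₄
        (mul_nonneg hW.le ht0) (mul_nonneg hW.le (by linarith)) hw₄ (by ring)
    have heqW : (1-w₄)*(t*p + (1-t)*q) = w₁*x₁ + w₂*x₂ + w₃*x₃ := by
      rw [heq]; try field_simp
    have hleW : w₁ * g x₁ + w₂ * g x₂ + w₃ * g x₃ ≤ (1-w₄) * (t * g p + (1-t) * g q) := by
      have e1 : w₁ * g x₁ + w₂ * g x₂ + w₃ * g x₃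
          = (1-w₄) * (w₁/(1-w₄) * g x₁ + w₂/(1-w₄) * g x₂ + w₃/(1-w₄) * g x₃) := by
        field_simp
        try ring
      rw [e1]
      exact mul_le_mul_of_nonneg_left hle hW.le
    have trans4 : ∀ z : ℝ, (z = p ∨ z = q ∨ z = x₄) → (z = x₁ ∨ z = x₂ ∨ z = x₃ ∨ z = x₄) := by
      intro z hz
      rcases hz with h | h | h
      · subst h; tauto
      · subst h; tauto
      · tauto
    refine ⟨t', p', q', ht0', ht1', trans4 p' hp', trans4 q' hq', ?_, ?_⟩
    · rw [heq']; linear_combination heqW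
    · calc w₁ * g x₁ + w₂ * g x₂ + w₃ * g x₃ + w₄ * g x₄
          ≤ (1-w₄) * (t * g p + (1-t) * g q) + w₄ * g x₄ := by linarith
        _ = (1-w₄)*t * g p + (1-w₄)*(1-t) * g q + w₄ * g x₄ := by ring
        _ ≤ t' * g p' + (1-t') * g q' := hle'

set_option maxHeartbeats 1000000 in
/-- The agent's value `sup_γ (∫ g dγ − K(∫ x dγ))` over Borel probability measures on `[a,b]`
equals `max_{α ∈ [a,b]} (ĝ(α) − K(α))`, where `ĝ` is the concavification of the continuous
contract `g` and `K` is continuous and convex. -/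
theorem stmt_5 (a b : ℝ) (hab : a < b) (g ghat K : ℝ → ℝ)
    (hg_cont : ContinuousOn g (Set.Icc a b))
    (hghat : ∀ x ∈ Set.Icc a b,
      ghat x = sInf {y : ℝ | ∃ u : ℝ → ℝ, ConcaveOn ℝ (Set.Icc a b) u ∧
        (∀ z ∈ Set.Icc a b, g z ≤ u z) ∧ y = u x})
    (hK_cont : ContinuousOn K (Set.Icc a b))
    (hK_conv : ConvexOn ℝ (Set.Icc a b) K) :
    ∃ α₀ ∈ Set.Icc a b,
      (∀ α ∈ Set.Icc a b, ghat α - K α ≤ ghat α₀ - K α₀) ∧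
      IsGreatest {r : ℝ | ∃ γ : Measure ℝ, IsProbabilityMeasure γ ∧
          γ (Set.Icc a b) = 1 ∧ r = (∫ x, g x ∂γ) - K (∫ x, x ∂γ)}
        (ghat α₀ - K α₀) := by
  have hbIcc : b ∈ Icc a b := ⟨hab.le, le_refl b⟩
  have haIcc : a ∈ Icc a b := ⟨le_refl a, hab.le⟩
  -- convex combinations stay in the interval
  have hmemIcc : ∀ t x y : ℝ, 0 ≤ t → t ≤ 1 → x ∈ Icc a b → y ∈ Icc a b →
      t*x + (1-t)*y ∈ Icc a b := by
    intro t x y ht0 ht1 hx hy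
    have := (convex_Icc a b) hx hy ht0 (by linarith : (0:ℝ) ≤ 1 - t) (by ring)
    simpa [smul_eq_mul] using this
  -- maximum of g on the interval
  obtain ⟨zM, hzM, hzMmax⟩ := isCompact_Icc.exists_isMaxOn (nonempty_Icc.2 hab.le) hg_cont
  -- the set of two-point chord values above α
  set S : ℝ → Set ℝ := fun α => {v | ∃ t x y, 0 ≤ t ∧ t ≤ 1 ∧ x ∈ Icc a b ∧ y ∈ Icc a b ∧
      t*x + (1-t)*y = α ∧ v = t * g x + (1-t) * g y} with hS
  set h : ℝ → ℝ := fun α => sSup (S α) with hh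
  have hgS : ∀ α ∈ Icc a b, g α ∈ S α := by
    intro α hα
    exact ⟨1, α, b, by norm_num, by norm_num, hα, hbIcc, by ring, by ring⟩
  have hSne : ∀ α ∈ Icc a b, (S α).Nonempty := fun α hα => ⟨g α, hgS α hα⟩
  have hSbdd : ∀ α, BddAbove (S α) := by
    intro α
    refine ⟨g zM, ?_⟩
    rintro v ⟨t, x, y, ht0, ht1, hx, hy, heq, rfl⟩
    nlinarith [mul_le_mul_of_nonneg_left (hzMmax hx) ht0,
      mul_le_mul_of_nonneg_left (hzMmax hy) (by linarith : (0:ℝ) ≤ 1 - t)]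
  have hgh : ∀ α ∈ Icc a b, g α ≤ h α := fun α hα => le_csSup (hSbdd α) (hgS α hα)
  -- attainment of the sup by a two-point combination
  have hattain : ∀ α ∈ Icc a b, ∃ t x y, 0 ≤ t ∧ t ≤ 1 ∧ x ∈ Icc a b ∧ y ∈ Icc a b ∧
      t*x + (1-t)*y = α ∧ h α = t * g x + (1-t) * g y := by
    intro α hα
    have hFc : IsCompact {p : ℝ × ℝ × ℝ | p.1 ∈ Icc (0:ℝ) 1 ∧ p.2.1 ∈ Icc a b ∧
        p.2.2 ∈ Icc a b ∧ p.1*p.2.1 + (1-p.1)*p.2.2 = α} := by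
      have h1 : IsCompact ((Icc (0:ℝ) 1) ×ˢ (Icc a b) ×ˢ (Icc a b)) :=
        isCompact_Icc.prod (isCompact_Icc.prod isCompact_Icc)
      have h2 : IsClosed {p : ℝ × ℝ × ℝ | p.1*p.2.1 + (1-p.1)*p.2.2 = α} :=
        isClosed_eq (by fun_prop) continuous_const
      have : {p : ℝ × ℝ × ℝ | p.1 ∈ Icc (0:ℝ) 1 ∧ p.2.1 ∈ Icc a b ∧
          p.2.2 ∈ Icc a b ∧ p.1*p.2.1 + (1-p.1)*p.2.2 = α}
          = ((Icc (0:ℝ) 1) ×ˢ (Icc a b) ×ˢ (Icc a b)) ∩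
            {p : ℝ × ℝ × ℝ | p.1*p.2.1 + (1-p.1)*p.2.2 = α} := by
        ext p; simp only [Set.mem_inter_iff, Set.mem_prod, Set.mem_setOf_eq]; tauto
      rw [this]
      exact h1.inter_right h2
    have hFne : ({p : ℝ × ℝ × ℝ | p.1 ∈ Icc (0:ℝ) 1 ∧ p.2.1 ∈ Icc a b ∧
        p.2.2 ∈ Icc a b ∧ p.1*p.2.1 + (1-p.1)*p.2.2 = α}).Nonempty :=
      ⟨(1, α, b), ⟨by norm_num, hα, hbIcc, by ring⟩⟩
    have hVcont : ContinuousOn (fun p : ℝ × ℝ × ℝ => p.1 * g p.2.1 + (1-p.1) * g p.2.2)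
        {p : ℝ × ℝ × ℝ | p.1 ∈ Icc (0:ℝ) 1 ∧ p.2.1 ∈ Icc a b ∧
          p.2.2 ∈ Icc a b ∧ p.1*p.2.1 + (1-p.1)*p.2.2 = α} := by
      have hg1 : ContinuousOn (fun p : ℝ × ℝ × ℝ => g p.2.1)
          {p : ℝ × ℝ × ℝ | p.1 ∈ Icc (0:ℝ) 1 ∧ p.2.1 ∈ Icc a b ∧
            p.2.2 ∈ Icc a b ∧ p.1*p.2.1 + (1-p.1)*p.2.2 = α} :=
        hg_cont.comp (continuous_fst.comp continuous_snd).continuousOn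
          (fun p hp => hp.2.1)
      have hg2 : ContinuousOn (fun p : ℝ × ℝ × ℝ => g p.2.2)
          {p : ℝ × ℝ × ℝ | p.1 ∈ Icc (0:ℝ) 1 ∧ p.2.1 ∈ Icc a b ∧
            p.2.2 ∈ Icc a b ∧ p.1*p.2.1 + (1-p.1)*p.2.2 = α} :=
        hg_cont.comp (continuous_snd.comp continuous_snd).continuousOn
          (fun p hp => hp.2.2.1)
      exact ((continuous_fst.continuousOn).mul hg1).add
        (((continuous_const.sub continuous_fst).continuousOn).mul hg2)
    obtain ⟨p, hpF, hpmax⟩ := hFc.exists_isMaxOn hFne hVcont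
    refine ⟨p.1, p.2.1, p.2.2, hpF.1.1, hpF.1.2, hpF.2.1, hpF.2.2.1, hpF.2.2.2, ?_⟩
    have hgr : IsGreatest (S α) (p.1 * g p.2.1 + (1-p.1) * g p.2.2) := by
      constructor
      · show p.1 * g p.2.1 + (1-p.1) * g p.2.2 ∈ S α
        exact ⟨p.1, p.2.1, p.2.2, hpF.1.1, hpF.1.2, hpF.2.1, hpF.2.2.1, hpF.2.2.2, rfl⟩
      · rintro v ⟨t, x, y, ht0, ht1, hx, hy, heq, rfl⟩
        exact hpmax (show (t, x, y) ∈ {p : ℝ × ℝ × ℝ | p.1 ∈ Icc (0:ℝ) 1 ∧ p.2.1 ∈ Icc a b ∧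
          p.2.2 ∈ Icc a b ∧ p.1*p.2.1 + (1-p.1)*p.2.2 = α} from ⟨⟨ht0, ht1⟩, hx, hy, heq⟩)
    exact hgr.csSup_eq
  -- concavity of h
  have hconc : ConcaveOn ℝ (Icc a b) h := by
    refine ⟨convex_Icc a b, ?_⟩
    intro α₁ hα₁ α₂ hα₂ s₁ s₂ hs₁ hs₂ hs
    simp only [smul_eq_mul]
    obtain ⟨t, x, y, ht0, ht1, hx, hy, heq1, hval1⟩ := hattain α₁ hα₁
    obtain ⟨t', x', y', ht0', ht1', hx', hy', heq2, hval2⟩ := hattain α₂ hα₂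
    obtain ⟨T, P, Q, hT0, hT1, hP, hQ, hEq, hLe⟩ :=
      chord4 g x y x' y' (s₁*t) (s₁*(1-t)) (s₂*t') (s₂*(1-t'))
        (mul_nonneg hs₁ ht0) (mul_nonneg hs₁ (by linarith))
        (mul_nonneg hs₂ ht0') (mul_nonneg hs₂ (by linarith))
        (by linear_combination hs)
    have hPmem : P ∈ Icc a b := by rcases hP with h' | h' | h' | h' <;> rw [h'] <;> assumption
    have hQmem : Q ∈ Icc a b := by rcases hQ with h' | h' | h' | h' <;> rw [h'] <;> assumption
    have hmem : T * g P + (1-T) * g Q ∈ S (s₁ * α₁ + s₂ * α₂) := by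
      refine ⟨T, P, Q, hT0, hT1, hPmem, hQmem, ?_, rfl⟩
      linear_combination hEq + s₁ * heq1 + s₂ * heq2
    calc s₁ * h α₁ + s₂ * h α₂
        = s₁*t * g x + s₁*(1-t) * g y + s₂*t' * g x' + s₂*(1-t') * g y' := by
          rw [hval1, hval2]; ring
      _ ≤ T * g P + (1-T) * g Q := hLe
      _ ≤ h (s₁ * α₁ + s₂ * α₂) := le_csSup (hSbdd _) hmem
  -- h agrees with the concavification
  have hghat_eq : ∀ α ∈ Icc a b, ghat α = h α := by
    intro α hα
    rw [hghat α hα]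
    apply le_antisymm
    · exact csInf_le ⟨g α, by rintro y ⟨u, hu, hug, rfl⟩; exact hug α hα⟩
        ⟨h, hconc, hgh, rfl⟩
    · have hGne : ({y : ℝ | ∃ u : ℝ → ℝ, ConcaveOn ℝ (Set.Icc a b) u ∧
          (∀ z ∈ Set.Icc a b, g z ≤ u z) ∧ y = u α}).Nonempty :=
        ⟨g zM, fun _ => g zM, concaveOn_const _ (convex_Icc a b), fun z hz => hzMmax hz, rfl⟩
      apply le_csInf hGne
      rintro y ⟨u, hu, hug, rfl⟩
      apply csSup_le (hSne α hα)
      rintro v ⟨t, x, y', ht0, ht1, hx, hy', heq, rfl⟩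
      have h1 : t * g x + (1-t) * g y' ≤ t * u x + (1-t) * u y' :=
        add_le_add (mul_le_mul_of_nonneg_left (hug x hx) ht0)
          (mul_le_mul_of_nonneg_left (hug y' hy') (by linarith))
      have h2 := hu.2 hx hy' ht0 (by linarith : (0:ℝ) ≤ 1 - t) (by ring)
      simp only [smul_eq_mul] at h2
      rw [heq] at h2
      linarith
  -- the global maximization over two-point contracts
  obtain ⟨p₀, hp₀, hmax⟩ := (isCompact_Icc.prod (isCompact_Icc.prod isCompact_Icc) :
      IsCompact ((Icc (0:ℝ) 1) ×ˢ (Icc a b) ×ˢ (Icc a b))).exists_isMaxOn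
    ⟨(1, a, b), by refine ⟨by norm_num, haIcc, hbIcc⟩⟩
    (f := fun p : ℝ × ℝ × ℝ => p.1 * g p.2.1 + (1-p.1) * g p.2.2
      - K (p.1*p.2.1 + (1-p.1)*p.2.2))
    (by
      have hg1 : ContinuousOn (fun p : ℝ × ℝ × ℝ => g p.2.1)
          ((Icc (0:ℝ) 1) ×ˢ (Icc a b) ×ˢ (Icc a b)) :=
        hg_cont.comp (continuous_fst.comp continuous_snd).continuousOn
          (fun p hp => hp.2.1)
      have hg2 : ContinuousOn (fun p : ℝ × ℝ × ℝ => g p.2.2)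
          ((Icc (0:ℝ) 1) ×ˢ (Icc a b) ×ˢ (Icc a b)) :=
        hg_cont.comp (continuous_snd.comp continuous_snd).continuousOn
          (fun p hp => hp.2.2)
      have hK1 : ContinuousOn (fun p : ℝ × ℝ × ℝ => K (p.1*p.2.1 + (1-p.1)*p.2.2))
          ((Icc (0:ℝ) 1) ×ˢ (Icc a b) ×ˢ (Icc a b)) :=
        hK_cont.comp (by fun_prop : Continuous fun p : ℝ × ℝ × ℝ =>
            p.1*p.2.1 + (1-p.1)*p.2.2).continuousOn
          (fun p hp => hmemIcc p.1 p.2.1 p.2.2 hp.1.1 hp.1.2 hp.2.1 hp.2.2)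
      exact (((continuous_fst.continuousOn).mul hg1).add
        (((continuous_const.sub continuous_fst).continuousOn).mul hg2)).sub hK1)
  obtain ⟨t₀, x₀, y₀⟩ := p₀
  obtain ⟨ht₀I, hx₀I, hy₀I⟩ := hp₀
  set α₀ := t₀*x₀ + (1-t₀)*y₀ with hα₀def
  have hα₀I : α₀ ∈ Icc a b := hmemIcc t₀ x₀ y₀ ht₀I.1 ht₀I.2 hx₀I hy₀I
  set M : ℝ := t₀ * g x₀ + (1-t₀) * g y₀ - K α₀ with hM
  -- h α - K α ≤ M for all α, with equality at α₀
  have hub : ∀ α ∈ Icc a b, h α ≤ M + K α := by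
    intro α hα
    apply csSup_le (hSne α hα)
    rintro v ⟨t, x, y, ht0, ht1, hx, hy, heq, rfl⟩
    have h3 : t * g x + (1-t) * g y - K (t*x + (1-t)*y)
        ≤ t₀ * g x₀ + (1-t₀) * g y₀ - K (t₀*x₀ + (1-t₀)*y₀) :=
      hmax (⟨⟨ht0, ht1⟩, hx, hy⟩ :
        (t, x, y) ∈ (Icc (0:ℝ) 1) ×ˢ (Icc a b) ×ˢ (Icc a b))
    rw [heq] at h3
    simp only [hM, hα₀def]
    linarith
  have hα₀eq : h α₀ = M + K α₀ := by
    apply le_antisymm (hub α₀ hα₀I)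
    apply le_csSup (hSbdd α₀)
    exact ⟨t₀, x₀, y₀, ht₀I.1, ht₀I.2, hx₀I, hy₀I, rfl, by rw [hM]; ring⟩
  refine ⟨α₀, hα₀I, ?_, ?_, ?_⟩
  · intro α hα
    rw [hghat_eq α hα, hghat_eq α₀ hα₀I, hα₀eq]
    have := hub α hα
    linarith
  · -- membership : the two-point measure achieves the value
    have hdiracInt : ∀ (f : ℝ → ℝ) (c : ℝ), Integrable f (Measure.dirac c) := by
      intro f c
      have hfc : f =ᵐ[Measure.dirac c] fun _ => f c := by
        rw [ae_dirac_eq]; exact Filter.eventually_pure.2 rfl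
      exact (integrable_const (f c)).congr hfc.symm
    set γ₀ : Measure ℝ := (ENNReal.ofReal t₀) • Measure.dirac x₀
        + (ENNReal.ofReal (1-t₀)) • Measure.dirac y₀ with hγ₀
    have ht₀0 : (0:ℝ) ≤ t₀ := ht₀I.1
    have ht₀1 : (0:ℝ) ≤ 1 - t₀ := by
      have := ht₀I.2
      simp at this
      linarith
    have hint : ∀ f : ℝ → ℝ, ∫ x, f x ∂γ₀ = t₀ * f x₀ + (1-t₀) * f y₀ := by
      intro f
      rw [hγ₀, integral_add_measure
        ((hdiracInt f x₀).smul_measure ENNReal.ofReal_ne_top)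
        ((hdiracInt f y₀).smul_measure ENNReal.ofReal_ne_top),
        integral_smul_measure, integral_smul_measure, integral_dirac, integral_dirac,
        ENNReal.toReal_ofReal ht₀0, ENNReal.toReal_ofReal ht₀1, smul_eq_mul, smul_eq_mul]
    have hγ₀prob : IsProbabilityMeasure γ₀ := by
      constructor
      rw [hγ₀]
      simp only [Measure.add_apply, Measure.smul_apply, smul_eq_mul,
        Measure.dirac_apply_of_mem (mem_univ x₀), Measure.dirac_apply_of_mem (mem_univ y₀),
        mul_one]
      rw [← ENNReal.ofReal_add ht₀0 ht₀1]
      norm_num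
    have hγ₀Icc : γ₀ (Icc a b) = 1 := by
      rw [hγ₀]
      simp only [Measure.add_apply, Measure.smul_apply, smul_eq_mul,
        Measure.dirac_apply_of_mem hx₀I, Measure.dirac_apply_of_mem hy₀I, mul_one]
      rw [← ENNReal.ofReal_add ht₀0 ht₀1]
      norm_num
    refine ⟨γ₀, hγ₀prob, hγ₀Icc, ?_⟩
    rw [hint g, hint (fun x => x)]
    rw [hghat_eq α₀ hα₀I, hα₀eq, hM, hα₀def]
    ring
  · -- upper bound over all probability measures
    rintro r ⟨γ, hγp, hγ1, rfl⟩
    have hcompl : γ (Icc a b)ᶜ = 0 := by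
      rw [measure_compl measurableSet_Icc (by simp [hγ1])]
      rw [hγ1, measure_univ]
      simp
    have hae : ∀ᵐ x ∂γ, x ∈ Icc a b := by
      rw [ae_iff]
      convert hcompl using 2
      ext x; simp
    -- the clamped version of g
    set cl : ℝ → ℝ := fun x => min b (max a x) with hcl
    have hclmem : ∀ x, cl x ∈ Icc a b :=
      fun x => ⟨le_min hab.le (le_max_left a x), min_le_left b _⟩
    have hclcont : Continuous cl := continuous_const.min (continuous_const.max continuous_id)
    have hgc : Continuous (g ∘ cl) := hg_cont.comp_continuous hclcont hclmem
    have hcleq : ∀ x ∈ Icc a b, (g ∘ cl) x = g x := by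
      intro x hx
      have : cl x = x := by
        rw [hcl]
        simp only
        rw [max_eq_right hx.1, min_eq_right hx.2]
      simp [Function.comp, this]
    have hgae : g =ᵐ[γ] (g ∘ cl) := by
      filter_upwards [hae] with x hx
      exact (hcleq x hx).symm
    obtain ⟨zA, hzA, hzAmax⟩ := isCompact_Icc.exists_isMaxOn (nonempty_Icc.2 hab.le)
      (hg_cont.abs : ContinuousOn (fun z => |g z|) (Icc a b))
    have hgcInt : Integrable (g ∘ cl) γ := by
      refine Integrable.mono' (integrable_const (|g zA|)) hgc.aestronglyMeasurable ?_
      refine Filter.Eventually.of_forall fun x => ?_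
      rw [Real.norm_eq_abs]
      exact hzAmax (hclmem x)
    have hgInt : Integrable g γ := hgcInt.congr hgae.symm
    have hidInt : Integrable (fun x => x) γ := by
      refine Integrable.mono' (integrable_const (|a| + |b|))
        continuous_id.aestronglyMeasurable ?_
      filter_upwards [hae] with x hx
      rw [Real.norm_eq_abs]
      rw [abs_le]
      constructor
      · linarith [neg_abs_le a, abs_nonneg b, hx.1]
      · linarith [le_abs_self b, abs_nonneg a, hx.2]
    set m : ℝ := ∫ x, x ∂γ with hm
    have hconstint : ∀ c : ℝ, ∫ _, c ∂γ = c := by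
      intro c
      rw [integral_const]
      simp
    have ham : a ≤ m := by
      rw [hm, ← hconstint a]
      exact integral_mono_ae (integrable_const a) hidInt
        (by filter_upwards [hae] with x hx; exact hx.1)
    have hmb : m ≤ b := by
      rw [hm, ← hconstint b]
      exact integral_mono_ae hidInt (integrable_const b)
        (by filter_upwards [hae] with x hx; exact hx.2)
    have hmI : m ∈ Icc a b := ⟨ham, hmb⟩
    have hgm : ∫ x, g x ∂γ ≤ h m := by
      rcases eq_or_lt_of_le ham with hma | hma
      · -- m = a : the measure is a.e. the Dirac mass at a
        have h0 : ∫ x, (x - a) ∂γ = 0 := by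
          rw [integral_sub hidInt (integrable_const a), hconstint a, ← hm, ← hma]
          ring
        have hInta : Integrable (fun x => x - a) γ := hidInt.sub (integrable_const a)
        have hxa : (fun x => x - a) =ᵐ[γ] 0 :=
          (integral_eq_zero_iff_of_nonneg_ae
            (by filter_upwards [hae] with x hx
                simp only [Pi.zero_apply, sub_nonneg]
                exact hx.1)
            hInta).1 h0
        have hgconst : g =ᵐ[γ] fun _ => g a := by
          filter_upwards [hxa] with x hx
          have : x = a := by simpa [sub_eq_zero] using hx
          rw [this]
        rw [integral_congr_ae hgconst, hconstint (g a), ← hma]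
        exact hgh a haIcc
      · rcases eq_or_lt_of_le hmb with hmb' | hmb'
        · -- m = b
          have h0 : ∫ x, (b - x) ∂γ = 0 := by
            rw [integral_sub (integrable_const b) hidInt, hconstint b, ← hm, hmb']
            ring
          have hIntb : Integrable (fun x => b - x) γ := (integrable_const b).sub hidInt
          have hxb : (fun x => b - x) =ᵐ[γ] 0 :=
            (integral_eq_zero_iff_of_nonneg_ae
              (by filter_upwards [hae] with x hx
                  simp only [Pi.zero_apply, sub_nonneg]
                  exact hx.2)
              hIntb).1 h0
          have hgconst : g =ᵐ[γ] fun _ => g b := by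
            filter_upwards [hxb] with x hx
            have hx' : b - x = 0 := by simpa using hx
            have : x = b := by linarith
            rw [this]
          rw [integral_congr_ae hgconst, hconstint (g b), hmb']
          exact hgh b hbIcc
        · -- a < m < b : supporting line of the concave function h at m
          have hslne : ({s : ℝ | ∃ x ∈ Ico a m, s = (h m - h x)/(m - x)}).Nonempty :=
            ⟨(h m - h a)/(m - a), a, ⟨le_refl a, hma⟩, rfl⟩
          have hslbdd : BddBelow {s : ℝ | ∃ x ∈ Ico a m, s = (h m - h x)/(m - x)} := by
            refine ⟨(h b - h m)/(b - m), ?_⟩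
            rintro s ⟨x, hx, rfl⟩
            exact hconc.slope_anti_adjacent ⟨hx.1, (hx.2.trans hmb').le⟩ hbIcc hx.2 hmb'
          set c : ℝ := sInf {s : ℝ | ∃ x ∈ Ico a m, s = (h m - h x)/(m - x)} with hcdef
          have hsupp : ∀ z ∈ Icc a b, h z ≤ h m + c * (z - m) := by
            intro z hz
            rcases lt_trichotomy z m with hzm | hzm | hzm
            · have h1 : c ≤ (h m - h z)/(m - z) := csInf_le hslbdd ⟨z, ⟨hz.1, hzm⟩, rfl⟩
              have h2 : c * (m - z) ≤ h m - h z := by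
                have := (le_div_iff₀ (by linarith : (0:ℝ) < m - z)).1 h1
                linarith
              linarith
            · rw [hzm]; simp
            · have h1 : (h z - h m)/(z - m) ≤ c := by
                apply le_csInf hslne
                rintro s ⟨x, hx, rfl⟩
                exact hconc.slope_anti_adjacent ⟨hx.1, (hx.2.trans hmb').le⟩ hz hx.2 hzm
              have h2 := (div_le_iff₀ (by linarith : (0:ℝ) < z - m)).1 h1
              linarith
          have hglin : ∀ᵐ x ∂γ, g x ≤ h m + c * (x - m) := by
            filter_upwards [hae] with x hx
            exact (hgh x hx).trans (hsupp x hx)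
          have hIntm : Integrable (fun x => x - m) γ := hidInt.sub (integrable_const m)
          have hIntcm : Integrable (fun x => c * (x - m)) γ := hIntm.const_mul c
          have hlinInt : Integrable (fun x => h m + c * (x - m)) γ :=
            (integrable_const (h m)).add hIntcm
          calc ∫ x, g x ∂γ ≤ ∫ x, (h m + c * (x - m)) ∂γ :=
                integral_mono_ae hgInt hlinInt hglin
            _ = h m := by
                rw [integral_add (integrable_const (h m)) hIntcm, hconstint (h m)]
                have h4 : ∫ x, c * (x - m) ∂γ = c * ∫ x, (x - m) ∂γ := integral_const_mul c _
                have h5 : ∫ x, (x - m) ∂γ = (∫ x, x ∂γ) - m := by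
                  rw [integral_sub hidInt (integrable_const m), hconstint m]
                rw [h4, h5, ← hm]
                ring
    have hfin : h m - K m ≤ M := by
      have := hub m hmI
      linarith
    rw [hghat_eq α₀ hα₀I, hα₀eq]
    linarith
end

section
/- Fix 0 ≤ r̲ ≤ r̄ ≤ C with C > 0, and constants k ≥ 0, m ≥ 0. Define g : [0,C] → ℝ by g(α) = k·α + m if α ∈ [r̲, r̄] and g(α) = 0 otherwise. Then the concavification ĝ of g satisfies: ĝ(α) = (k·r̲ + m)·(α/r̲) for α ∈ [0, r̲) when r̲ > 0; ĝ(α) = k·α + m for α ∈ [r̲, r̄]; and ĝ(α) = (k·r̄ + m)·(C − α)/(C − r̄) for α ∈ (r̄, C] when r̄ < C. -/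
open Set

private lemma aff_concave (s : Set ℝ) (hs : Convex ℝ s) (a b : ℝ) :
    ConcaveOn ℝ s (fun x => a * x + b) := by
  refine ⟨hs, fun x _ y _ p q hp hq hpq => ?_⟩
  simp only [smul_eq_mul]
  have : p * (a * x + b) + q * (a * y + b) = a * (p * x + q * y) + b := by
    linear_combination b * hpq
  linarith

/-- Explicit three-piece form of the concavification of a truncated-range linear contract
`g(α) = k·α + m` on `[r̲, r̄]`, `g = 0` elsewhere, over `[0,C]`. -/
theorem stmt_7 (C : ℝ) (hC : 0 < C) (rlo rhi k m : ℝ)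
    (hrlo : 0 ≤ rlo) (hr : rlo ≤ rhi) (hrhi : rhi ≤ C)
    (hk : 0 ≤ k) (hm : 0 ≤ m)
    (g ghat : ℝ → ℝ)
    (hg : ∀ α, g α = if α ∈ Set.Icc rlo rhi then k * α + m else 0)
    (hghat : ∀ x ∈ Set.Icc 0 C,
      ghat x = sInf {y : ℝ | ∃ u : ℝ → ℝ, ConcaveOn ℝ (Set.Icc 0 C) u ∧
        (∀ z ∈ Set.Icc 0 C, g z ≤ u z) ∧ y = u x}) :
    (0 < rlo → ∀ α ∈ Set.Ico (0:ℝ) rlo, ghat α = (k * rlo + m) * (α / rlo)) ∧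
    (∀ α ∈ Set.Icc rlo rhi, ghat α = k * α + m) ∧
    (rhi < C → ∀ α ∈ Set.Ioc rhi C, ghat α = (k * rhi + m) * ((C - α) / (C - rhi))) := by
  classical
  set L1 : ℝ → ℝ := fun α => if rlo = 0 then k * α + m else (k * rlo + m) / rlo * α with hL1def
  set L2 : ℝ → ℝ := fun α => k * α + m with hL2def
  set L3 : ℝ → ℝ := fun α => if rhi = C then k * α + m
      else (k * rhi + m) * ((C - α) / (C - rhi)) with hL3def
  -- affinity
  have hL1aff : ∃ a b : ℝ, L1 = fun α => a * α + b := by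
    by_cases h : rlo = 0
    · exact ⟨k, m, by simp [hL1def, h]⟩
    · exact ⟨(k * rlo + m) / rlo, 0, by funext α; simp [hL1def, h]⟩
  have hL3aff : ∃ a b : ℝ, L3 = fun α => a * α + b := by
    by_cases h : rhi = C
    · exact ⟨k, m, by simp [hL3def, h]⟩
    · refine ⟨-((k * rhi + m) / (C - rhi)), (k * rhi + m) * C / (C - rhi), ?_⟩
      funext α; simp only [hL3def, if_neg h]; ring
  -- Properties of L1
  have P1 : ∀ z, 0 ≤ z → 0 ≤ L1 z := by
    intro z hz
    by_cases h : rlo = 0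
    · simp only [hL1def, if_pos h]; positivity
    · simp only [hL1def, if_neg h]
      have : 0 < rlo := lt_of_le_of_ne hrlo (Ne.symm h)
      positivity
  have P2 : ∀ z, rlo ≤ z → k * z + m ≤ L1 z := by
    intro z hz
    by_cases h : rlo = 0
    · simp [hL1def, h]
    · have h0 : 0 < rlo := lt_of_le_of_ne hrlo (Ne.symm h)
      simp only [hL1def, if_neg h]
      rw [div_mul_eq_mul_div, le_div_iff₀ h0]
      nlinarith
  have P3 : 0 < rlo → ∀ α, L1 α = (k * rlo + m) * (α / rlo) := by
    intro h0 α
    simp only [hL1def, if_neg (ne_of_gt h0)]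
    field_simp
  have P4 : ∀ α, 0 ≤ α → α ≤ rlo → L1 α ≤ k * α + m := by
    intro α h0 h1
    by_cases h : rlo = 0
    · simp [hL1def, h]
    · have hp : 0 < rlo := lt_of_le_of_ne hrlo (Ne.symm h)
      simp only [hL1def, if_neg h]
      rw [div_mul_eq_mul_div, div_le_iff₀ hp]
      nlinarith
  -- Properties of L3
  have Q1 : ∀ z, 0 ≤ z → z ≤ C → 0 ≤ L3 z := by
    intro z hz0 hz
    by_cases h : rhi = C
    · simp only [hL3def, if_pos h]
      nlinarith
    · have hp : 0 < C - rhi := sub_pos.2 (lt_of_le_of_ne hrhi h)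
      simp only [hL3def, if_neg h]
      have h1 : 0 ≤ k * rhi + m := by nlinarith
      have h2 : 0 ≤ (C - z) / (C - rhi) := div_nonneg (by linarith) hp.le
      positivity
  have Q2 : ∀ z, z ≤ rhi → k * z + m ≤ L3 z := by
    intro z hz
    by_cases h : rhi = C
    · simp [hL3def, h]
    · have hp : 0 < C - rhi := sub_pos.2 (lt_of_le_of_ne hrhi h)
      simp only [hL3def, if_neg h]
      rw [mul_div_assoc', le_div_iff₀ hp]
      nlinarith [mul_nonneg (sub_nonneg.2 hz) (add_nonneg (mul_nonneg hk hC.le) hm)]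
  have Q3 : rhi < C → ∀ α, L3 α = (k * rhi + m) * ((C - α) / (C - rhi)) := by
    intro h0 α
    simp only [hL3def, if_neg (ne_of_lt h0)]
  have Q4 : ∀ α, rhi ≤ α → α ≤ C → L3 α ≤ k * α + m := by
    intro α h0 h1
    by_cases h : rhi = C
    · simp [hL3def, h]
    · have hp : 0 < C - rhi := sub_pos.2 (lt_of_le_of_ne hrhi h)
      simp only [hL3def, if_neg h]
      rw [mul_div_assoc', div_le_iff₀ hp]
      nlinarith [mul_nonneg (sub_nonneg.2 h0) (add_nonneg (mul_nonneg hk hC.le) hm)]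
  -- Cross comparisons
  have P5 : ∀ α, 0 ≤ α → α ≤ rlo → L1 α ≤ L3 α := by
    intro α h0 h1
    by_cases h : rhi = C
    · calc L1 α ≤ k * α + m := P4 α h0 h1
        _ = L3 α := by simp [hL3def, h]
    · by_cases h' : rlo = 0
      · have hp : 0 < C - rhi := sub_pos.2 (lt_of_le_of_ne hrhi h)
        calc L1 α = k * α + m := by simp [hL1def, h']
          _ ≤ L3 α := Q2 α (by linarith)
      · have hp : 0 < C - rhi := sub_pos.2 (lt_of_le_of_ne hrhi h)
        have hq : 0 < rlo := lt_of_le_of_ne hrlo (Ne.symm h')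
        simp only [hL1def, if_neg h', hL3def, if_neg h]
        rw [div_mul_eq_mul_div, mul_div_assoc', div_le_div_iff₀ hq hp]
        have hh1 : 0 ≤ C * (rhi - α) := mul_nonneg hC.le (by linarith)
        have hh2 : 0 ≤ C * (rlo - α) + α * (rhi - rlo) :=
          add_nonneg (mul_nonneg hC.le (by linarith)) (mul_nonneg h0 (by linarith))
        nlinarith [mul_nonneg (mul_nonneg hk hq.le) hh1, mul_nonneg hm hh2]
  have Q5 : ∀ α, rhi ≤ α → α ≤ C → L3 α ≤ L1 α := by
    intro α h0 h1
    by_cases h : rlo = 0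
    · calc L3 α ≤ k * α + m := Q4 α h0 h1
        _ = L1 α := by simp [hL1def, h]
    · by_cases h' : rhi = C
      · have hq : 0 < rlo := lt_of_le_of_ne hrlo (Ne.symm h)
        calc L3 α = k * α + m := by simp [hL3def, h']
          _ ≤ L1 α := P2 α (hr.trans h0)
      · have hp : 0 < C - rhi := sub_pos.2 (lt_of_le_of_ne hrhi h')
        have hq : 0 < rlo := lt_of_le_of_ne hrlo (Ne.symm h)
        simp only [hL1def, if_neg h, hL3def, if_neg h']
        rw [mul_div_assoc', div_mul_eq_mul_div, div_le_div_iff₀ hp hq]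
        have hh1 : 0 ≤ k * rlo * C * (α - rhi) :=
          mul_nonneg (mul_nonneg (mul_nonneg hk hq.le) hC.le) (by linarith)
        have hh2 : 0 ≤ C * (α - rhi) + (C - α) * (rhi - rlo) :=
          add_nonneg (mul_nonneg hC.le (by linarith)) (mul_nonneg (by linarith) (by linarith))
        nlinarith [hh1, mul_nonneg hm hh2]
  -- the candidate concave majorant
  set h : ℝ → ℝ := fun α => min (L1 α) (min (L2 α) (L3 α)) with hhdef
  have hcvx : Convex ℝ (Icc (0:ℝ) C) := convex_Icc 0 C
  have hconc : ConcaveOn ℝ (Icc (0:ℝ) C) h := by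
    obtain ⟨a1, b1, e1⟩ := hL1aff
    obtain ⟨a3, b3, e3⟩ := hL3aff
    have c1 : ConcaveOn ℝ (Icc (0:ℝ) C) L1 := e1 ▸ aff_concave _ hcvx a1 b1
    have c2 : ConcaveOn ℝ (Icc (0:ℝ) C) L2 := aff_concave _ hcvx k m
    have c3 : ConcaveOn ℝ (Icc (0:ℝ) C) L3 := e3 ▸ aff_concave _ hcvx a3 b3
    exact c1.inf (c2.inf c3)
  have hdom : ∀ z ∈ Icc (0:ℝ) C, g z ≤ h z := by
    intro z hz
    rw [hg z]
    split_ifs with hzm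
    · exact le_min (P2 z hzm.1) (le_min le_rfl (Q2 z hzm.2))
    · refine le_min (P1 z hz.1) (le_min ?_ (Q1 z hz.1 hz.2))
      have : (0:ℝ) ≤ k * z + m := by nlinarith [hz.1]
      exact this
  -- general facts about the defining sets
  have hSne : ∀ x, h x ∈ {y : ℝ | ∃ u : ℝ → ℝ, ConcaveOn ℝ (Set.Icc 0 C) u ∧
      (∀ z ∈ Set.Icc 0 C, g z ≤ u z) ∧ y = u x} := fun x => ⟨h, hconc, hdom, rfl⟩
  have hSbdd : ∀ x ∈ Icc (0:ℝ) C, BddBelow {y : ℝ | ∃ u : ℝ → ℝ, ConcaveOn ℝ (Set.Icc 0 C) u ∧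
      (∀ z ∈ Set.Icc 0 C, g z ≤ u z) ∧ y = u x} := by
    intro x hx
    refine ⟨0, fun y hy => ?_⟩
    obtain ⟨u, hu, hge, rfl⟩ := hy
    refine le_trans ?_ (hge x hx)
    rw [hg x]; split_ifs with hxm
    · nlinarith [hx.1]
    · exact le_refl 0
  refine ⟨?_, ?_, ?_⟩
  · -- left piece
    intro h0 α hα
    have hαC : α ∈ Icc (0:ℝ) C := ⟨hα.1, le_trans hα.2.le (hr.trans hrhi)⟩
    rw [hghat α hαC]
    apply le_antisymm
    · calc sInf _ ≤ h α := csInf_le (hSbdd α hαC) (hSne α)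
        _ = L1 α := min_eq_left (le_min (P4 α hα.1 hα.2.le) (P5 α hα.1 hα.2.le))
        _ = (k * rlo + m) * (α / rlo) := P3 h0 α
    · refine le_csInf ⟨h α, hSne α⟩ ?_
      rintro y ⟨u, hu, hge, rfl⟩
      have h0m : (0:ℝ) ∈ Icc (0:ℝ) C := ⟨le_refl 0, hC.le⟩
      have hrm : rlo ∈ Icc (0:ℝ) C := ⟨hrlo, hr.trans hrhi⟩
      have hu0 : 0 ≤ u 0 := by
        refine le_trans ?_ (hge 0 h0m)
        rw [hg 0]
        split_ifs with hc
        · nlinarith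
        · exact le_refl 0
      have hur : k * rlo + m ≤ u rlo := by
        refine le_trans ?_ (hge rlo hrm)
        rw [hg rlo, if_pos ⟨le_refl rlo, hr⟩]
      set t : ℝ := α / rlo with htdef
      have ht0 : 0 ≤ t := div_nonneg hα.1 hrlo
      have ht1 : t ≤ 1 := (div_le_one h0).2 hα.2.le
      have key := hu.2 h0m hrm (by linarith : (0:ℝ) ≤ 1 - t) ht0 (by ring)
      simp only [smul_eq_mul, mul_zero, zero_add] at key
      have hta : t * rlo = α := div_mul_cancel₀ α (ne_of_gt h0)
      rw [hta] at key
      nlinarith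
  · -- middle piece
    intro α hα
    have hαC : α ∈ Icc (0:ℝ) C := ⟨hrlo.trans hα.1, hα.2.trans hrhi⟩
    rw [hghat α hαC]
    apply le_antisymm
    · calc sInf _ ≤ h α := csInf_le (hSbdd α hαC) (hSne α)
        _ = k * α + m := by
          have : min (L2 α) (L3 α) = L2 α := min_eq_left (Q2 α hα.2)
          rw [hhdef]; simp only [this]
          exact min_eq_right (P2 α hα.1)
    · refine le_csInf ⟨h α, hSne α⟩ ?_
      rintro y ⟨u, hu, hge, rfl⟩
      have := hge α hαC
      rw [hg α, if_pos hα] at this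
      exact this
  · -- right piece
    intro h0 α hα
    have hαC : α ∈ Icc (0:ℝ) C := ⟨le_trans (hrlo.trans hr) hα.1.le, hα.2⟩
    have hp : 0 < C - rhi := sub_pos.2 h0
    rw [hghat α hαC]
    apply le_antisymm
    · calc sInf _ ≤ h α := csInf_le (hSbdd α hαC) (hSne α)
        _ = L3 α := by
          have e1 : min (L2 α) (L3 α) = L3 α := min_eq_right (Q4 α hα.1.le hα.2)
          rw [hhdef]; simp only [e1]
          exact min_eq_right (Q5 α hα.1.le hα.2)
        _ = (k * rhi + m) * ((C - α) / (C - rhi)) := Q3 h0 α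
    · refine le_csInf ⟨h α, hSne α⟩ ?_
      rintro y ⟨u, hu, hge, rfl⟩
      have hCm : C ∈ Icc (0:ℝ) C := ⟨hC.le, le_refl C⟩
      have hrm : rhi ∈ Icc (0:ℝ) C := ⟨hrlo.trans hr, hrhi⟩
      have huC : 0 ≤ u C := by
        refine le_trans ?_ (hge C hCm)
        rw [hg C]
        split_ifs with hc
        · nlinarith
        · exact le_refl 0
      have hur : k * rhi + m ≤ u rhi := by
        refine le_trans ?_ (hge rhi hrm)
        rw [hg rhi, if_pos ⟨hr, le_refl rhi⟩]
      set t : ℝ := (C - α) / (C - rhi) with htdef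
      have ht0 : 0 ≤ t := div_nonneg (by linarith [hα.2]) hp.le
      have ht1 : t ≤ 1 := (div_le_one hp).2 (by linarith [hα.1])
      have key := hu.2 hrm hCm ht0 (by linarith : (0:ℝ) ≤ 1 - t) (by ring)
      simp only [smul_eq_mul] at key
      have hta : t * rhi + (1 - t) * C = α := by
        rw [htdef]; field_simp; ring
      rw [hta] at key
      nlinarith
end

section
/- Let K₀, K₁ : [0,C] → ℝ be continuously differentiable and strictly convex with K₀(0) = K₁(0) = 0, K₀'(0) = K₁'(0), and K₀'(t) > K₁'(t) for t ∈ (0,C]. Let α₀, α₁ ∈ [0,C] with κ₀ := K₀'(α₀) > κ₁ := K₁'(α₁), and suppose there exist α₀¹, α₁⁰ ∈ [0,C] with K₀'(α₀¹) = κ₁ and K₁'(α₁⁰) = κ₀. Then (κ₀·α₀ − K₀(α₀)) − (κ₁·α₀¹ − K₀(α₀¹)) < (κ₀·α₁⁰ − K₁(α₁⁰)) − (κ₁·α₁ − K₁(α₁)). -/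
open Set

private lemma tangent_le {K k : ℝ → ℝ} {s : Set ℝ} (hconv : StrictConvexOn ℝ s K)
    (hK : ∀ t ∈ s, HasDerivWithinAt K (k t) s t)
    {u v : ℝ} (hu : u ∈ s) (hv : v ∈ s) :
    K u + k u * (v - u) ≤ K v := by
  rcases lt_trichotomy u v with h | h | h
  · have h2 := hconv.lt_slope_of_hasDerivWithinAt hu hv h (hK u hu)
    rw [slope_def_field] at h2
    rw [lt_div_iff₀ (by linarith : (0:ℝ) < v - u)] at h2
    linarith
  · subst h; simp
  · have h2 := hconv.slope_lt_of_hasDerivWithinAt hv hu h (hK u hu)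
    rw [slope_def_field] at h2
    rw [div_lt_iff₀ (by linarith : (0:ℝ) < u - v)] at h2
    linarith

private lemma k_strictMono {K k : ℝ → ℝ} {s : Set ℝ} (hconv : StrictConvexOn ℝ s K)
    (hK : ∀ t ∈ s, HasDerivWithinAt K (k t) s t) : StrictMonoOn k s :=
  fun x hx y hy hxy =>
    (hconv.lt_slope_of_hasDerivWithinAt hx hy hxy (hK x hx)).trans
      (hconv.slope_lt_of_hasDerivWithinAt hx hy hxy (hK y hy))

private lemma exists_inverse {k : ℝ → ℝ} {a b : ℝ} (hab : a ≤ b)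
    (hk : ContinuousOn k (Icc a b)) (hmono : StrictMonoOn k (Icc a b)) :
    ∃ x : ℝ → ℝ, ContinuousOn x (Icc (k a) (k b)) ∧
      ∀ κ ∈ Icc (k a) (k b), x κ ∈ Icc a b ∧ k (x κ) = κ := by
  haveI : CompactSpace (Icc a b) := isCompact_iff_compactSpace.mp isCompact_Icc
  have hma : a ∈ Icc a b := left_mem_Icc.mpr hab
  have hmb : b ∈ Icc a b := right_mem_Icc.mpr hab
  have hmapsto : ∀ t : Icc a b, k t.1 ∈ Icc (k a) (k b) := fun t =>
    ⟨hmono.monotoneOn hma t.2 t.2.1, hmono.monotoneOn t.2 hmb t.2.2⟩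
  have hFc : Continuous (fun t : Icc a b => (⟨k t.1, hmapsto t⟩ : Icc (k a) (k b))) :=
    Continuous.subtype_mk hk.restrict _
  have hFbij : Function.Bijective (fun t : Icc a b => (⟨k t.1, hmapsto t⟩ : Icc (k a) (k b))) := by
    constructor
    · intro t t' h
      have h2 : k t.1 = k t'.1 := congrArg Subtype.val h
      exact Subtype.ext (hmono.injOn t.2 t'.2 h2)
    · rintro ⟨κ, hκ⟩
      rcases intermediate_value_Icc hab hk hκ with ⟨t, ht, hkt⟩
      exact ⟨⟨t, ht⟩, Subtype.ext hkt⟩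
  have hec : Continuous (Equiv.ofBijective _ hFbij) := hFc
  let h := hec.homeoOfEquivCompactToT2
  refine ⟨fun κ => if hκ : κ ∈ Icc (k a) (k b) then (h.symm ⟨κ, hκ⟩ : ℝ) else a, ?_, ?_⟩
  · rw [continuousOn_iff_continuous_restrict]
    have heq : (Icc (k a) (k b)).domRestrict
        (fun κ => if hκ : κ ∈ Icc (k a) (k b) then (h.symm ⟨κ, hκ⟩ : ℝ) else a)
        = fun y => (h.symm y : ℝ) := by
      funext y
      exact dif_pos y.2
    rw [heq]
    exact continuous_subtype_val.comp h.symm.continuous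
  · intro κ hκ
    simp only [dif_pos hκ]
    refine ⟨(h.symm ⟨κ, hκ⟩).2, ?_⟩
    have h2 : h (h.symm ⟨κ, hκ⟩) = ⟨κ, hκ⟩ := h.apply_symm_apply ⟨κ, hκ⟩
    exact congrArg Subtype.val h2

private lemma key (C : ℝ) (K k : ℝ → ℝ)
    (hK : ∀ t ∈ Icc 0 C, HasDerivWithinAt K (k t) (Icc 0 C) t)
    (hkc : ContinuousOn k (Icc 0 C))
    (hconv : StrictConvexOn ℝ (Icc 0 C) K)
    {a b : ℝ} (ha : a ∈ Icc 0 C) (hb : b ∈ Icc 0 C) (hab : a < b) :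
    ∃ x : ℝ → ℝ, ContinuousOn x (Icc (k a) (k b)) ∧
      (∀ κ ∈ Icc (k a) (k b), x κ ∈ Icc a b ∧ k (x κ) = κ) ∧
      ∫ κ in (k a)..(k b), x κ = (k b * b - K b) - (k a * a - K a) := by
  have hsub : Icc a b ⊆ Icc 0 C := Icc_subset_Icc ha.1 hb.2
  have hmono : StrictMonoOn k (Icc 0 C) := k_strictMono hconv hK
  have hkab : k a < k b := hmono ha hb hab
  obtain ⟨x, hxc, hx⟩ := exists_inverse hab.le (hkc.mono hsub) (hmono.mono hsub)
  have hKc : ContinuousOn K (Icc 0 C) := fun t ht => (hK t ht).continuousWithinAt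
  set G : ℝ → ℝ := fun κ => κ * x κ - K (x κ) with hG
  have hGc : ContinuousOn G (Icc (k a) (k b)) :=
    (continuousOn_id.mul hxc).sub (hKc.comp hxc (fun κ hκ => hsub (hx κ hκ).1))
  have hsand : ∀ u ∈ Icc (k a) (k b), ∀ v ∈ Icc (k a) (k b),
      (v - u) * x u ≤ G v - G u := by
    intro u hu v hv
    have ht := tangent_le hconv hK (hsub (hx v hv).1) (hsub (hx u hu).1)
    rw [(hx v hv).2] at ht
    show (v - u) * x u ≤ (v * x v - K (x v)) - (u * x u - K (x u))
    linarith
  have hG' : ∀ κ ∈ Icc (k a) (k b), HasDerivWithinAt G (x κ) (Icc (k a) (k b)) κ := by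
    intro κ hκ
    rw [hasDerivWithinAt_iff_tendsto_slope]
    have hxt : Filter.Tendsto x (nhdsWithin κ (Icc (k a) (k b) \ {κ})) (nhds (x κ)) :=
      ((hxc κ hκ).mono diff_subset).tendsto
    have hbound : ∀ κ' ∈ Icc (k a) (k b) \ {κ},
        dist (slope G κ κ') (x κ) ≤ dist (x κ') (x κ) := by
      intro κ' hκ'
      obtain ⟨hκ'mem, hne⟩ := hκ'
      have hne' : κ' ≠ κ := hne
      rw [Real.dist_eq, Real.dist_eq, slope_def_field]
      have hla := le_abs_self (x κ' - x κ)
      have hna := neg_abs_le (x κ' - x κ)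
      rcases lt_or_gt_of_ne hne' with h | h
      · -- κ' < κ
        have h1 := hsand κ' hκ'mem κ hκ
        have h2 := hsand κ hκ κ' hκ'mem
        have hneg : κ' - κ < 0 := by linarith
        have hq1 : x κ' ≤ (G κ' - G κ) / (κ' - κ) := by
          rw [le_div_iff_of_neg hneg]; linarith
        have hq2 : (G κ' - G κ) / (κ' - κ) ≤ x κ := by
          rw [div_le_iff_of_neg hneg]; linarith
        rw [abs_sub_le_iff]
        constructor <;> linarith
      · -- κ < κ'
        have h1 := hsand κ' hκ'mem κ hκ
        have h2 := hsand κ hκ κ' hκ'mem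
        have hpos : (0:ℝ) < κ' - κ := by linarith
        have hq1 : x κ ≤ (G κ' - G κ) / (κ' - κ) := by
          rw [le_div_iff₀ hpos]; linarith
        have hq2 : (G κ' - G κ) / (κ' - κ) ≤ x κ' := by
          rw [div_le_iff₀ hpos]; linarith
        rw [abs_sub_le_iff]
        constructor <;> linarith
    have h0 : Filter.Tendsto (fun κ' => dist (x κ') (x κ))
        (nhdsWithin κ (Icc (k a) (k b) \ {κ})) (nhds 0) :=
      tendsto_iff_dist_tendsto_zero.1 hxt
    exact tendsto_iff_dist_tendsto_zero.2
      (squeeze_zero' (Filter.Eventually.of_forall fun _ => dist_nonneg)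
        (eventually_mem_nhdsWithin.mono hbound) h0)
  have hint : IntervalIntegrable x MeasureTheory.volume (k a) (k b) :=
    hxc.intervalIntegrable_of_Icc hkab.le
  have hftc : ∫ κ in (k a)..(k b), x κ = G (k b) - G (k a) :=
    intervalIntegral.integral_eq_sub_of_hasDeriv_right_of_le hkab.le hGc
      (fun κ hκ => (hG' κ (Ioo_subset_Icc_self hκ)).mono_of_mem_nhdsWithin
        (Icc_mem_nhdsGT_of_mem ⟨hκ.1.le, hκ.2⟩)) hint
  have hrb : k b ∈ Icc (k a) (k b) := right_mem_Icc.mpr hkab.le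
  have hra : k a ∈ Icc (k a) (k b) := left_mem_Icc.mpr hkab.le
  have hxb : x (k b) = b := hmono.injOn (hsub (hx _ hrb).1) hb (hx _ hrb).2
  have hxa : x (k a) = a := hmono.injOn (hsub (hx _ hra).1) ha (hx _ hra).2
  refine ⟨x, hxc, hx, ?_⟩
  rw [hftc]
  show (k b * x (k b) - K (x (k b))) - (k a * x (k a) - K (x (k a))) = _
  rw [hxa, hxb]

/-- Two full-range contracts with distinct powers `κ₀ = K₀'(α₀) > κ₁ = K₁'(α₁)` violate joint
incentive compatibility: the low type's rent difference `∫_{κ₁}^{κ₀} (K₀')⁻¹` is strictly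
below the high type's rent difference `∫_{κ₁}^{κ₀} (K₁')⁻¹`. -/
theorem stmt_11 (C : ℝ) (hC : 0 < C) (K₀ K₁ k₀ k₁ : ℝ → ℝ)
    (hK₀ : ∀ t ∈ Set.Icc 0 C, HasDerivWithinAt K₀ (k₀ t) (Set.Icc 0 C) t)
    (hK₁ : ∀ t ∈ Set.Icc 0 C, HasDerivWithinAt K₁ (k₁ t) (Set.Icc 0 C) t)
    (hk₀_cont : ContinuousOn k₀ (Set.Icc 0 C))
    (hk₁_cont : ContinuousOn k₁ (Set.Icc 0 C))
    (hK₀_conv : StrictConvexOn ℝ (Set.Icc 0 C) K₀)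
    (hK₁_conv : StrictConvexOn ℝ (Set.Icc 0 C) K₁)
    (hK₀0 : K₀ 0 = 0) (hK₁0 : K₁ 0 = 0)
    (heq0 : k₀ 0 = k₁ 0)
    (hlt : ∀ t ∈ Set.Ioc 0 C, k₁ t < k₀ t)
    (α₀ α₁ : ℝ) (hα₀ : α₀ ∈ Set.Icc 0 C) (hα₁ : α₁ ∈ Set.Icc 0 C)
    (hκ : k₁ α₁ < k₀ α₀)
    (a01 a10 : ℝ) (ha01 : a01 ∈ Set.Icc 0 C) (ha10 : a10 ∈ Set.Icc 0 C)
    (h01 : k₀ a01 = k₁ α₁) (h10 : k₁ a10 = k₀ α₀) :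
    (k₀ α₀ * α₀ - K₀ α₀) - (k₁ α₁ * a01 - K₀ a01)
      < (k₀ α₀ * a10 - K₁ a10) - (k₁ α₁ * α₁ - K₁ α₁) := by
  have hmono₀ : StrictMonoOn k₀ (Icc 0 C) := k_strictMono hK₀_conv hK₀
  have hmono₁ : StrictMonoOn k₁ (Icc 0 C) := k_strictMono hK₁_conv hK₁
  have h1 : a01 < α₀ := (hmono₀.lt_iff_lt ha01 hα₀).mp (by rw [h01]; exact hκ)
  have h2 : α₁ < a10 := (hmono₁.lt_iff_lt hα₁ ha10).mp (by rw [h10]; exact hκ)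
  obtain ⟨x₀, hx₀c, hx₀p, hx₀i⟩ := key C K₀ k₀ hK₀ hk₀_cont hK₀_conv ha01 hα₀ h1
  obtain ⟨x₁, hx₁c, hx₁p, hx₁i⟩ := key C K₁ k₁ hK₁ hk₁_cont hK₁_conv hα₁ ha10 h2
  rw [h01] at hx₀c hx₀p hx₀i
  rw [h10] at hx₁c hx₁p hx₁i
  rw [← hx₀i, ← hx₁i]
  have hsub₀ : Icc a01 α₀ ⊆ Icc 0 C := Icc_subset_Icc ha01.1 hα₀.2
  have hsub₁ : Icc α₁ a10 ⊆ Icc 0 C := Icc_subset_Icc hα₁.1 ha10.2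
  apply intervalIntegral.integral_lt_integral_of_continuousOn_of_le_of_exists_lt hκ hx₀c hx₁c
  · -- x₀ ≤ x₁ on Ioc
    intro κ hκ'
    have hκm : κ ∈ Icc (k₁ α₁) (k₀ α₀) := ⟨hκ'.1.le, hκ'.2⟩
    obtain ⟨ht, hkt⟩ := hx₀p κ hκm
    obtain ⟨hs, hks⟩ := hx₁p κ hκm
    by_contra hcon
    push_neg at hcon
    have htC : x₀ κ ∈ Icc 0 C := hsub₀ ht
    have hsC : x₁ κ ∈ Icc 0 C := hsub₁ hs
    have hpos : 0 < x₀ κ := lt_of_le_of_lt hsC.1 hcon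
    have h3 : k₁ (x₀ κ) < k₀ (x₀ κ) := hlt _ ⟨hpos, htC.2⟩
    have h4 : k₁ (x₁ κ) < k₁ (x₀ κ) := hmono₁ hsC htC hcon
    rw [hks, hkt] at *
    linarith
  · -- strict at midpoint
    have hκm : (k₁ α₁ + k₀ α₀) / 2 ∈ Icc (k₁ α₁) (k₀ α₀) := ⟨by linarith, by linarith⟩
    refine ⟨(k₁ α₁ + k₀ α₀) / 2, hκm, ?_⟩
    obtain ⟨ht, hkt⟩ := hx₀p _ hκm
    obtain ⟨hs, hks⟩ := hx₁p _ hκm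
    have htC : x₀ ((k₁ α₁ + k₀ α₀) / 2) ∈ Icc 0 C := hsub₀ ht
    have hsC : x₁ ((k₁ α₁ + k₀ α₀) / 2) ∈ Icc 0 C := hsub₁ hs
    have h3 : a01 < x₀ ((k₁ α₁ + k₀ α₀) / 2) :=
      (hmono₀.lt_iff_lt ha01 htC).mp (by rw [hkt, h01]; linarith)
    have hpos : 0 < x₀ ((k₁ α₁ + k₀ α₀) / 2) := lt_of_le_of_lt ha01.1 h3
    have h4 : k₁ (x₀ ((k₁ α₁ + k₀ α₀) / 2)) < k₀ (x₀ ((k₁ α₁ + k₀ α₀) / 2)) :=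
      hlt _ ⟨hpos, htC.2⟩
    refine (hmono₁.lt_iff_lt htC hsC).mp ?_
    rw [hks, hkt] at *
    exact h4
end

section
/- Let Θ : [0,C] → ℝ be concave and differentiable, and K : [0,C] → ℝ twice differentiable, strictly increasing, with K''(t) > 0 for all t. Suppose α* ∈ [0,C] maximizes α ↦ Θ(α) − K'(α)·α over [0,C], and α** ∈ [0,C) maximizes α ↦ Θ(α) − K(α) over [0,C]. Then α* ≤ α**. -/
open Set

/-- The pure moral hazard effort `α*` (maximizing `Θ(α) − K'(α)·α`) is weakly below the
first-best effort `α**` (maximizing `Θ(α) − K(α)`, attained in `[0,C)`), for concave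
differentiable `Θ` and twice differentiable strictly increasing `K` with `K'' > 0`. -/
theorem stmt_15 (C : ℝ) (hC : 0 < C) (Θ K k k' : ℝ → ℝ)
    (hΘ_conc : ConcaveOn ℝ (Set.Icc 0 C) Θ)
    (hΘ_diff : ∀ t ∈ Set.Icc 0 C, DifferentiableWithinAt ℝ Θ (Set.Icc 0 C) t)
    (hK : ∀ t ∈ Set.Icc 0 C, HasDerivWithinAt K (k t) (Set.Icc 0 C) t)
    (hk : ∀ t ∈ Set.Icc 0 C, HasDerivWithinAt k (k' t) (Set.Icc 0 C) t)
    (hK_mono : StrictMonoOn K (Set.Icc 0 C))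
    (hk'_pos : ∀ t ∈ Set.Icc 0 C, 0 < k' t)
    (αstar αfb : ℝ)
    (hαstar_mem : αstar ∈ Set.Icc 0 C)
    (hαstar : IsMaxOn (fun α => Θ α - k α * α) (Set.Icc 0 C) αstar)
    (hαfb_mem : αfb ∈ Set.Ico 0 C)
    (hαfb : IsMaxOn (fun α => Θ α - K α) (Set.Icc 0 C) αfb) :
    αstar ≤ αfb := by
  by_contra hcon
  push_neg at hcon
  have haI : αfb ∈ Set.Icc 0 C := ⟨hαfb_mem.1, hαfb_mem.2.le⟩
  have hbI : αstar ∈ Set.Icc 0 C := hαstar_mem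
  have hab : αfb < αstar := hcon
  have hkd : ∀ x ∈ Set.Ioo (0:ℝ) C, HasDerivAt k (k' x) x := fun x hx =>
    (hk x (Set.Ioo_subset_Icc_self hx)).hasDerivAt (Icc_mem_nhds hx.1 hx.2)
  have hKd : ∀ x ∈ Set.Ioo (0:ℝ) C, HasDerivAt K (k x) x := fun x hx =>
    (hK x (Set.Ioo_subset_Icc_self hx)).hasDerivAt (Icc_mem_nhds hx.1 hx.2)
  have hk_mono : StrictMonoOn k (Set.Icc 0 C) := by
    apply strictMonoOn_of_deriv_pos (convex_Icc 0 C)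
      (fun x hx => (hk x hx).continuousWithinAt)
    intro x hx
    rw [interior_Icc] at hx
    rw [(hkd x hx).deriv]
    exact hk'_pos x (Set.Ioo_subset_Icc_self hx)
  have hsub : Set.Icc αfb αstar ⊆ Set.Icc 0 C := Set.Icc_subset_Icc haI.1 hbI.2
  have hKcont : ContinuousOn K (Set.Icc αfb αstar) := fun x hx =>
    ((hK x (hsub hx)).continuousWithinAt).mono hsub
  obtain ⟨ξ, hξ, hξeq⟩ := exists_hasDerivAt_eq_slope K k hab hKcont
    (fun x hx => hKd x ⟨lt_of_le_of_lt haI.1 hx.1, lt_of_lt_of_le hx.2 hbI.2⟩)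
  have hξI : ξ ∈ Set.Icc 0 C := ⟨(lt_of_le_of_lt haI.1 hξ.1).le, (lt_of_lt_of_le hξ.2 hbI.2).le⟩
  have hKeq : K αstar - K αfb = k ξ * (αstar - αfb) := by
    rw [eq_div_iff (sub_ne_zero.mpr hab.ne')] at hξeq; linarith
  have hξb : k ξ < k αstar := hk_mono hξI hbI hξ.2
  have hkab : k αfb < k αstar := hk_mono haI hbI hab
  have h1 : Θ αfb - k αfb * αfb ≤ Θ αstar - k αstar * αstar := hαstar haI
  have h2 : Θ αstar - K αstar ≤ Θ αfb - K αfb := hαfb hbI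
  have ha0 : 0 ≤ αfb := haI.1
  nlinarith [mul_lt_mul_of_pos_right hξb (sub_pos.mpr hab),
    mul_nonneg ha0 (sub_pos.mpr hkab).le]
end
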